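/- Let p be a prime with p ≡ 1 (mod 8). Then for all x, y, z, w ∈ pℤ_p: ∑_{k=0}^{(p-1)/4} (16k+1) · [ (1/8)_k · (1/4 - x)_k · (1/4 - y)_k · (1/4 - z)_k · (1/4 - w)_k · ((1-p)/4)_k ] / [ (7/8 + x)_k · (7/8 + y)_k · (7/8 + z)_k · (7/8 + w)_k · (7/8 + p/4)_k · k! ] ∈ pℤ_p. -/

import Mathlib

/-- Rising factorial (Pochhammer symbol) `(a)_k = a(a+1)⋯(a+k-1)` in `ℚ_p`. -/
noncomputable def rf {p : ℕ} [Fact p.Prime] (a : ℚ_[p]) (k : ℕ) : ℚ_[p] :=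
  ∏ j ∈ Finset.range k, (a + (j : ℚ_[p]))

namespace S15
open Finset

lemma Gabs {K : Type*} [Field K]
    (ak bk ck fk aj bj cj fj am bm cm fm s t x1 y1 : K)
    (hs : s*s = 1) (ht : t*t = 1)
    (hx1 : x1 ≠ 0) (hy1 : y1 ≠ 0)
    (hak : ak ≠ 0) (hbk : bk ≠ 0) (hck : ck ≠ 0) (hfk : fk ≠ 0)
    (E1 : aj * (s * x1^3 * fk) = am)
    (E2 : bj * (s * ck) = bm * x1)
    (E3 : cj * (s * x1 * bk) = cm)
    (E4 : fj * (s * ak) = fm * x1^3)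
    (E5a : am = (s*t) * (x1^3*y1^3) * fm)
    (E5b : cm = (s*t) * (x1*y1) * bm) :
    x1^2 * ak * bk^5 * cj^5 * fj = y1^2 * aj * bj^5 * ck^5 * fk := by
  have E3p : (cj * (s * x1 * bk))^5 = cm^5 := by rw [E3]
  have E2p : (bj * (s * ck))^5 = (bm * x1)^5 := by rw [E2]
  -- W1 : cj^5 * fj * (x1^5 * bk^5 * ak) = cm^5 * fm * x1^3
  have W1 : cj^5 * fj * (x1^5 * bk^5 * ak) = cm^5 * fm * x1^3 := by
    linear_combination (fj*s*ak)*E3p + cm^5*E4 -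
      cj^5*fj*x1^5*bk^5*ak*(1+s^2+s^4)*hs
  -- W2 : aj * bj^5 * (x1^3 * fk * ck^5) = am * bm^5 * x1^5
  have W2 : aj * bj^5 * (x1^3 * fk * ck^5) = am * bm^5 * x1^5 := by
    linear_combination (bj^5*s^5*ck^5)*E1 + am*E2p -
      aj*bj^5*x1^3*fk*ck^5*(1+s^2+s^4)*hs
  have hcm2 : cm^2 = (x1*y1)^2 * bm^2 := by
    have : cm^2 = ((s*t) * (x1*y1) * bm)^2 := by rw [E5b]
    linear_combination this + (x1*y1)^2*bm^2*t^2*hs + (x1*y1)^2*bm^2*ht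
  have hcross : am * (x1*y1) * bm = cm * (x1^3*y1^3) * fm := by
    linear_combination (x1*y1)*bm*E5a - (x1^3*y1^3)*fm*E5b
  -- final
  have M : (x1^5*bk^5*ak) * (x1^3*fk*ck^5) * (x1^3*y1^3) ≠ 0 := by
    apply mul_ne_zero; apply mul_ne_zero
    · exact mul_ne_zero (mul_ne_zero (pow_ne_zero _ hx1) (pow_ne_zero _ hbk)) hak
    · exact mul_ne_zero (mul_ne_zero (pow_ne_zero _ hx1) hfk) (pow_ne_zero _ hck)
    · exact mul_ne_zero (pow_ne_zero _ hx1) (pow_ne_zero _ hy1)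
  refine mul_left_cancel₀ M ?_
  linear_combination ((x1^3*y1^3)*(x1^3*fk*ck^5)*x1^2*ak*bk^5)*W1 -
    ((x1^3*y1^3)*(x1^5*bk^5*ak)*y1^2*ck^5*fk)*W2 +
    (x1^11*y1^3*ak*bk^5*ck^5*fk*cm*fm*(cm^2+(x1*y1)^2*bm^2))*hcm2 -
    (x1^12*y1^4*ak*bk^5*ck^5*fk*bm^4)*hcross


def A (k : ℕ) : ℕ := ∏ j ∈ range k, (8*j+1)
def B (k : ℕ) : ℕ := ∏ j ∈ range k, (4*j+1)
def C (k : ℕ) : ℕ := ∏ j ∈ range k, (8*j+7)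

lemma A_succ (n : ℕ) : A (n+1) = A n * (8*n+1) := prod_range_succ _ _
lemma B_succ (n : ℕ) : B (n+1) = B n * (4*n+1) := prod_range_succ _ _
lemma C_succ (n : ℕ) : C (n+1) = C n * (8*n+7) := prod_range_succ _ _
@[simp] lemma A_zero : A 0 = 1 := rfl
@[simp] lemma B_zero : B 0 = 1 := rfl
@[simp] lemma C_zero : C 0 = 1 := rfl

section Zmod
variable {p m : ℕ} [Fact p.Prime]

lemma cast_neg_of_add_eq {a b : ℕ} (h : a + b = p) :
    ((a : ℕ) : ZMod p) = -((b : ℕ) : ZMod p) := by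
  refine eq_neg_of_add_eq_zero_left ?_
  rw [← Nat.cast_add, h, ZMod.natCast_self]

lemma R1 (hpm : p = 8*m+1) : ∀ k j, k + j = m →
    (A j : ZMod p) * ((-1)^k * 2^(3*k) * (k.factorial : ZMod p)) = (A m : ZMod p) := by
  intro k
  induction k with
  | zero => intro j hj; simp only [Nat.zero_add] at hj; subst hj; simp
  | succ k ih =>
    intro j hj
    have ihj := ih (j+1) (by omega)
    have hfac : ((8*j+1 : ℕ) : ZMod p) = -((8*(k+1) : ℕ) : ZMod p) :=
      cast_neg_of_add_eq (by omega)
    rw [A_succ] at ihj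
    push_cast [Nat.factorial_succ] at ihj hfac ⊢
    linear_combination ihj - (A j : ZMod p)*(-1)^k*2^(3*k)*(k.factorial : ZMod p)*hfac

lemma R2 (hpm : p = 8*m+1) : ∀ k j, k + j = m →
    (B j : ZMod p) * ((-1)^k * (C k : ZMod p)) = (B m : ZMod p) * 2^k := by
  intro k
  induction k with
  | zero => intro j hj; simp only [Nat.zero_add] at hj; subst hj; simp
  | succ k ih =>
    intro j hj
    have ihj := ih (j+1) (by omega)
    have hfac : ((2*(4*j+1) : ℕ) : ZMod p) = -((8*k+7 : ℕ) : ZMod p) :=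
      cast_neg_of_add_eq (by omega)
    rw [B_succ] at ihj
    rw [C_succ]
    push_cast at ihj hfac ⊢
    linear_combination 2*ihj - (B j : ZMod p)*(-1)^k*(C k : ZMod p)*hfac

lemma R3 (hpm : p = 8*m+1) : ∀ k j, k + j = m →
    (C j : ZMod p) * ((-1)^k * 2^k * (B k : ZMod p)) = (C m : ZMod p) := by
  intro k
  induction k with
  | zero => intro j hj; simp only [Nat.zero_add] at hj; subst hj; simp
  | succ k ih =>
    intro j hj
    have ihj := ih (j+1) (by omega)
    have hfac : ((8*j+7 : ℕ) : ZMod p) = -((2*(4*k+1) : ℕ) : ZMod p) :=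
      cast_neg_of_add_eq (by omega)
    rw [C_succ] at ihj
    rw [B_succ]
    push_cast at ihj hfac ⊢
    linear_combination ihj - (C j : ZMod p)*(-1)^k*2^k*(B k : ZMod p)*hfac

lemma R4 (hpm : p = 8*m+1) : ∀ k j, k + j = m →
    (j.factorial : ZMod p) * ((-1)^k * (A k : ZMod p))
      = (m.factorial : ZMod p) * 2^(3*k) := by
  intro k
  induction k with
  | zero => intro j hj; simp only [Nat.zero_add] at hj; subst hj; simp
  | succ k ih =>
    intro j hj
    have ihj := ih (j+1) (by omega)
    have hfac : ((8*(j+1) : ℕ) : ZMod p) = -((8*k+1 : ℕ) : ZMod p) :=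
      cast_neg_of_add_eq (by omega)
    rw [Nat.factorial_succ] at ihj
    rw [A_succ]
    push_cast at ihj hfac ⊢
    linear_combination 8*ihj - (j.factorial : ZMod p)*(-1)^k*(A k : ZMod p)*hfac


-- ================= nondivisibility & nonzeroness =====================

lemma not_dvd_small {a : ℕ} (ha : 0 < a) (h : a < p) : ¬ p ∣ a :=
  fun hd => absurd (Nat.le_of_dvd ha hd) (not_le.mpr h)

lemma m_ge (hpm : p = 8*m+1) : 2 ≤ m := by
  rcases Nat.lt_or_ge m 2 with h | h
  · exfalso
    have hp := (Fact.out : p.Prime)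
    interval_cases m
    · rw [hpm] at hp; norm_num at hp
    · rw [hpm] at hp; norm_num at hp
  · exact h

lemma castA_ne (hpm : p = 8*m+1) {n : ℕ} (hn : n ≤ m) : ((A n : ℕ) : ZMod p) ≠ 0 := by
  have hc : ((A n : ℕ) : ZMod p) = ∏ i ∈ range n, ((8*i+1 : ℕ) : ZMod p) := by
    rw [A, Nat.cast_prod]
  rw [hc]
  refine Finset.prod_ne_zero_iff.mpr fun i hi => ?_
  have hi' : i < n := Finset.mem_range.mp hi
  intro hc0
  exact not_dvd_small (a := 8*i+1) (by omega) (by omega)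
    ((ZMod.natCast_eq_zero_iff _ _).mp hc0)

lemma castB_ne (hpm : p = 8*m+1) {n : ℕ} (hn : n ≤ m) : ((B n : ℕ) : ZMod p) ≠ 0 := by
  have hc : ((B n : ℕ) : ZMod p) = ∏ i ∈ range n, ((4*i+1 : ℕ) : ZMod p) := by
    rw [B, Nat.cast_prod]
  rw [hc]
  refine Finset.prod_ne_zero_iff.mpr fun i hi => ?_
  have hi' : i < n := Finset.mem_range.mp hi
  intro hc0
  exact not_dvd_small (a := 4*i+1) (by omega) (by omega)
    ((ZMod.natCast_eq_zero_iff _ _).mp hc0)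

lemma castC_ne (hpm : p = 8*m+1) {n : ℕ} (hn : n ≤ m) : ((C n : ℕ) : ZMod p) ≠ 0 := by
  have hc : ((C n : ℕ) : ZMod p) = ∏ i ∈ range n, ((8*i+7 : ℕ) : ZMod p) := by
    rw [C, Nat.cast_prod]
  rw [hc]
  refine Finset.prod_ne_zero_iff.mpr fun i hi => ?_
  have hi' : i < n := Finset.mem_range.mp hi
  intro hc0
  exact not_dvd_small (a := 8*i+7) (by omega) (by omega)
    ((ZMod.natCast_eq_zero_iff _ _).mp hc0)

lemma castFac_ne (hpm : p = 8*m+1) {n : ℕ} (hn : n ≤ 2*m) :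
    ((n.factorial : ℕ) : ZMod p) ≠ 0 := by
  intro hc0
  have hd := (ZMod.natCast_eq_zero_iff _ _).mp hc0
  have := (Nat.Prime.dvd_factorial (Fact.out)).mp hd
  omega

lemma two_ne (hpm : p = 8*m+1) : (2 : ZMod p) ≠ 0 := by
  intro h2
  have hc : ((2:ℕ) : ZMod p) = 0 := by exact_mod_cast h2
  have hd := (ZMod.natCast_eq_zero_iff _ _).mp hc
  have h2' := Nat.le_of_dvd (by norm_num) hd
  have := (Fact.out : p.Prime).one_lt
  omega

-- ================= the pairing divisibility =====================

lemma pair (hpm : p = 8*m+1) {k j : ℕ} (h : k + j = m) :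
    (((16*k+1) * 2^(2*k) * A k * B k^5 * C j^5 * j.factorial
      + (16*j+1) * 2^(2*j) * A j * B j^5 * C k^5 * k.factorial : ℕ) : ZMod p) = 0 := by
  subst h
  have hk : k ≤ k + j := by omega
  have hj : j ≤ k + j := by omega
  have h16 : ((16*j+1 : ℕ) : ZMod p) = -((16*k+1 : ℕ) : ZMod p) := by
    have hsum : ((16*j+1) + (16*k+1) : ℕ) = 2 * p := by omega
    refine eq_neg_of_add_eq_zero_left ?_
    rw [← Nat.cast_add, hsum]
    push_cast [ZMod.natCast_self]
    ring
  have h2 := two_ne hpm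
  have hG : ((2:ZMod p)^k)^2 * (A k : ZMod p) * (B k : ZMod p)^5 * (C j : ZMod p)^5
        * (j.factorial : ZMod p)
      = ((2:ZMod p)^j)^2 * (A j : ZMod p) * (B j : ZMod p)^5 * (C k : ZMod p)^5
        * (k.factorial : ZMod p) := by
    refine Gabs _ _ _ _ _ _ _ _ ((A (k+j) : ℕ) : ZMod p) ((B (k+j) : ℕ) : ZMod p)
      ((C (k+j) : ℕ) : ZMod p) (((k+j).factorial : ℕ) : ZMod p)
      ((-1)^k) ((-1)^j) ((2:ZMod p)^k) ((2:ZMod p)^j)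
      ?_ ?_ (pow_ne_zero _ h2) (pow_ne_zero _ h2)
      (castA_ne hpm hk) (castB_ne hpm hk) (castC_ne hpm hk) (castFac_ne hpm (by omega))
      ?_ ?_ ?_ ?_ ?_ ?_
    · rw [← pow_add]; exact Even.neg_one_pow ⟨k, rfl⟩
    · rw [← pow_add]; exact Even.neg_one_pow ⟨j, rfl⟩
    · have := R1 hpm k j rfl; linear_combination this
    · have := R2 hpm k j rfl; linear_combination this
    · have := R3 hpm k j rfl; linear_combination this
    · have := R4 hpm k j rfl; linear_combination this
    · have h5 := R1 hpm (k+j) 0 (by omega)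
      simp only [A_zero, Nat.cast_one, one_mul] at h5
      linear_combination -h5
    · have h5 := R3 hpm (k+j) 0 (by omega)
      simp only [C_zero, Nat.cast_one, one_mul] at h5
      linear_combination -h5
  push_cast
  push_cast at h16
  linear_combination (16*(k:ZMod p)+1)*hG +
    ((2:ZMod p)^(2*j)*(A j : ZMod p)*(B j : ZMod p)^5*(C k : ZMod p)^5*(k.factorial : ZMod p))*h16

end Zmod

-- ================= p-adic toolkit =====================

section Padic
variable {p m : ℕ} [Fact p.Prime]

lemma rf_zero (a : ℚ_[p]) : rf a 0 = 1 := Finset.prod_range_zero _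
lemma rf_succ (a : ℚ_[p]) (k : ℕ) : rf a (k+1) = rf a k * (a + k) := Finset.prod_range_succ _ _

lemma norm_natCast_le (n : ℕ) : ‖(n : ℚ_[p])‖ ≤ 1 := by
  have := Padic.norm_int_le_one (p := p) n
  exact_mod_cast this

lemma norm_natCast_eq_one {n : ℕ} (h : ¬ p ∣ n) : ‖(n : ℚ_[p])‖ = 1 := by
  refine le_antisymm (norm_natCast_le n) (not_lt.mp fun hlt => h ?_)
  have := (Padic.norm_intCast_lt_one_iff (p := p) (k := n)).mp (by exact_mod_cast hlt)
  exact_mod_cast this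

lemma norm_natCast_le_inv {n : ℕ} (h : p ∣ n) : ‖(n : ℚ_[p])‖ ≤ (p:ℝ)⁻¹ := by
  obtain ⟨c, rfl⟩ := h
  push_cast
  rw [norm_mul, Padic.norm_p]
  exact mul_le_of_le_one_right (by positivity) (norm_natCast_le c)

lemma cong_mul {a b c d : ℚ_[p]} {r : ℝ} (ha : ‖a‖ ≤ 1) (hd : ‖d‖ ≤ 1)
    (h1 : ‖a - b‖ ≤ r) (h2 : ‖c - d‖ ≤ r) : ‖a*c - b*d‖ ≤ r := by
  have key : a*c - b*d = a*(c-d) + (a-b)*d := by ring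
  rw [key]
  refine le_trans (Padic.nonarchimedean _ _) (max_le ?_ ?_)
  · rw [norm_mul]
    exact le_trans (mul_le_of_le_one_left (norm_nonneg _) ha) h2
  · rw [norm_mul]
    exact le_trans (mul_le_of_le_one_right (norm_nonneg _) hd) h1

lemma rf_norm_le {a : ℚ_[p]} (h : ‖a‖ ≤ 1) (k : ℕ) : ‖rf a k‖ ≤ 1 := by
  induction k with
  | zero => simp [rf_zero]
  | succ k ih =>
    rw [rf_succ, norm_mul]
    refine mul_le_one₀ ih (norm_nonneg _) ?_
    refine le_trans (Padic.nonarchimedean _ _) (max_le h (norm_natCast_le k))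

lemma rf_cong {a b : ℚ_[p]} {r : ℝ} (hb : ‖b‖ ≤ 1) (hab : ‖a - b‖ ≤ r)
    (hr1 : r ≤ 1) (k : ℕ) : ‖rf a k - rf b k‖ ≤ r := by
  have hr0 : 0 ≤ r := le_trans (norm_nonneg _) hab
  have ha : ‖a‖ ≤ 1 := by
    have : a = b + (a - b) := by ring
    rw [this]
    exact le_trans (Padic.nonarchimedean _ _) (max_le hb (le_trans hab hr1))
  induction k with
  | zero => simpa [rf_zero] using hr0
  | succ k ih =>
    rw [rf_succ, rf_succ]
    have hcd : ‖(a + (k:ℚ_[p])) - (b + k)‖ ≤ r := by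
      have : (a + (k:ℚ_[p])) - (b + k) = a - b := by ring
      rwa [this]
    have hbk : ‖b + (k:ℚ_[p])‖ ≤ 1 :=
      le_trans (Padic.nonarchimedean _ _) (max_le hb (norm_natCast_le k))
    exact cong_mul (rf_norm_le ha k) hbk ih hcd

lemma norm_add_eq_left {a b : ℚ_[p]} (h : ‖b‖ < ‖a‖) : ‖a + b‖ = ‖a‖ := by
  rw [Padic.add_eq_max_of_ne (ne_of_gt h), max_eq_left h.le]

lemma cong_div {e N1 D1 N0 D0 : ℚ_[p]} {r : ℝ} (he : ‖e‖ ≤ 1)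
    (hN : ‖N1 - N0‖ ≤ r) (hD : ‖D0 - D1‖ ≤ r) (hN1 : ‖N1‖ ≤ 1)
    (hD1 : ‖D1‖ = 1) (hD0 : ‖D0‖ = 1) :
    ‖e * N1 / D1 - e * N0 / D0‖ ≤ r := by
  have hD1' : D1 ≠ 0 := by intro h0; rw [h0, norm_zero] at hD1; norm_num at hD1
  have hD0' : D0 ≠ 0 := by intro h0; rw [h0, norm_zero] at hD0; norm_num at hD0
  have key : e * N1 / D1 - e * N0 / D0 = e * (N1*D0 - N0*D1) / (D1*D0) := by
    field_simp
  rw [key, norm_div, norm_mul e, norm_mul D1, hD1, hD0, one_mul, div_one]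
  have hbound : ‖N1*D0 - N0*D1‖ ≤ r := cong_mul hN1 (le_of_eq hD1) hN hD
  exact le_trans (mul_le_of_le_one_left (norm_nonneg _) he) hbound


-- ================= rf values =====================

lemma rfA (k : ℕ) : rf ((1:ℚ_[p])/8) k * 2^(3*k) = ((A k : ℕ) : ℚ_[p]) := by
  induction k with
  | zero => simp [rf_zero, A_zero]
  | succ k ih =>
    have e : (1:ℚ_[p])/8 * 8 = 1 := by norm_num
    have hstep : ((1:ℚ_[p])/8 + (k:ℚ_[p])) * 2^3 = ((8*k+1 : ℕ) : ℚ_[p]) := by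
      push_cast; linear_combination e
    rw [rf_succ, A_succ]
    calc rf ((1:ℚ_[p])/8) k * ((1:ℚ_[p])/8 + (k:ℚ_[p])) * 2^(3*(k+1))
        = (rf ((1:ℚ_[p])/8) k * 2^(3*k)) * (((1:ℚ_[p])/8 + (k:ℚ_[p])) * 2^3) := by ring
      _ = ((A k : ℕ) : ℚ_[p]) * ((8*k+1 : ℕ) : ℚ_[p]) := by rw [ih, hstep]
      _ = ((A k * (8*k+1) : ℕ) : ℚ_[p]) := by push_cast; ring

lemma rfB (k : ℕ) : rf ((1:ℚ_[p])/4) k * 2^(2*k) = ((B k : ℕ) : ℚ_[p]) := by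
  induction k with
  | zero => simp [rf_zero, B_zero]
  | succ k ih =>
    have e : (1:ℚ_[p])/4 * 4 = 1 := by norm_num
    have hstep : ((1:ℚ_[p])/4 + (k:ℚ_[p])) * 2^2 = ((4*k+1 : ℕ) : ℚ_[p]) := by
      push_cast; linear_combination e
    rw [rf_succ, B_succ]
    calc rf ((1:ℚ_[p])/4) k * ((1:ℚ_[p])/4 + (k:ℚ_[p])) * 2^(2*(k+1))
        = (rf ((1:ℚ_[p])/4) k * 2^(2*k)) * (((1:ℚ_[p])/4 + (k:ℚ_[p])) * 2^2) := by ring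
      _ = ((B k : ℕ) : ℚ_[p]) * ((4*k+1 : ℕ) : ℚ_[p]) := by rw [ih, hstep]
      _ = ((B k * (4*k+1) : ℕ) : ℚ_[p]) := by push_cast; ring

lemma rfC (k : ℕ) : rf ((7:ℚ_[p])/8) k * 2^(3*k) = ((C k : ℕ) : ℚ_[p]) := by
  induction k with
  | zero => simp [rf_zero, C_zero]
  | succ k ih =>
    have e : (7:ℚ_[p])/8 * 8 = 7 := by norm_num
    have hstep : ((7:ℚ_[p])/8 + (k:ℚ_[p])) * 2^3 = ((8*k+7 : ℕ) : ℚ_[p]) := by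
      push_cast; linear_combination e
    rw [rf_succ, C_succ]
    calc rf ((7:ℚ_[p])/8) k * ((7:ℚ_[p])/8 + (k:ℚ_[p])) * 2^(3*(k+1))
        = (rf ((7:ℚ_[p])/8) k * 2^(3*k)) * (((7:ℚ_[p])/8 + (k:ℚ_[p])) * 2^3) := by ring
      _ = ((C k : ℕ) : ℚ_[p]) * ((8*k+7 : ℕ) : ℚ_[p]) := by rw [ih, hstep]
      _ = ((C k * (8*k+7) : ℕ) : ℚ_[p]) := by push_cast; ring

-- ================= nondivisibility (wide range) =====================

lemma not_dvd_Bfac (hpm : p = 8*m+1) {j : ℕ} (hj : j < 2*m) : ¬ p ∣ (4*j+1) := by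
  rintro ⟨c, hc⟩
  rcases c with _ | c
  · omega
  · have h2 : p * 1 ≤ p * (c+1) := Nat.mul_le_mul_left p (by omega)
    have h3 : p * 1 ≤ 4*j+1 := by rw [hc]; exact h2
    omega

lemma not_dvd_Cfac (hpm : p = 8*m+1) {j : ℕ} (hj : j < 2*m) : ¬ p ∣ (8*j+7) := by
  rintro ⟨c, hc⟩
  rcases c with _ | _ | c
  · omega
  · omega
  · have h2 : p * 2 ≤ p * (c+2) := Nat.mul_le_mul_left p (by omega)
    have h3 : p * 2 ≤ 8*j+7 := by rw [hc]; exact h2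
    omega

lemma not_dvd_fac (hpm : p = 8*m+1) {n : ℕ} (hn : n ≤ 2*m) : ¬ p ∣ n.factorial := by
  intro h
  have := (Nat.Prime.dvd_factorial (Fact.out)).mp h
  omega

lemma not_dvd_Cprod (hpm : p = 8*m+1) {n : ℕ} (hn : n ≤ 2*m) : ¬ p ∣ C n := by
  induction n with
  | zero => simpa [C_zero] using Nat.Prime.one_lt (Fact.out : p.Prime) |>.ne'
  | succ n ih =>
    rw [C_succ]
    intro hd
    rcases (Nat.Prime.dvd_mul (Fact.out : p.Prime)).mp hd with h | h
    · exact ih (by omega) h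
    · exact not_dvd_Cfac hpm (by omega) h

lemma not_dvd_D (hpm : p = 8*m+1) {n : ℕ} (hn : n ≤ 2*m) :
    ¬ p ∣ (C n^5 * n.factorial) := by
  intro hd
  rcases (Nat.Prime.dvd_mul (Fact.out : p.Prime)).mp hd with h | h
  · exact not_dvd_Cprod hpm hn ((Nat.Prime.dvd_of_dvd_pow (Fact.out : p.Prime)) h)
  · exact not_dvd_fac hpm hn h

lemma C_pos (n : ℕ) : 0 < C n := Finset.prod_pos fun i _ => by omega

-- ================= norms of base points =====================

lemma norm_D (hpm : p = 8*m+1) {n : ℕ} (hn : n ≤ 2*m) :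
    ‖((C n^5 * n.factorial : ℕ) : ℚ_[p])‖ = 1 :=
  norm_natCast_eq_one (not_dvd_D hpm hn)

lemma norm_8 (hpm : p = 8*m+1) : ‖(8:ℚ_[p])‖ = 1 := by
  have hm := m_ge hpm
  have := norm_natCast_eq_one (p := p) (n := 8) (not_dvd_small (by norm_num) (by omega))
  simpa using this

lemma norm_4 (hpm : p = 8*m+1) : ‖(4:ℚ_[p])‖ = 1 := by
  have hm := m_ge hpm
  have := norm_natCast_eq_one (p := p) (n := 4) (not_dvd_small (by norm_num) (by omega))
  simpa using this

lemma norm_2 (hpm : p = 8*m+1) : ‖(2:ℚ_[p])‖ = 1 := by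
  have hm := m_ge hpm
  have := norm_natCast_eq_one (p := p) (n := 2) (not_dvd_small (by norm_num) (by omega))
  simpa using this

lemma norm_18_le (hpm : p = 8*m+1) : ‖(1:ℚ_[p])/8‖ ≤ 1 := by
  rw [norm_div, norm_one, norm_8 hpm]
  norm_num

lemma norm_14_le (hpm : p = 8*m+1) : ‖(1:ℚ_[p])/4‖ ≤ 1 := by
  rw [norm_div, norm_one, norm_4 hpm]
  norm_num

lemma norm_78_le (hpm : p = 8*m+1) : ‖(7:ℚ_[p])/8‖ ≤ 1 := by
  rw [norm_div, norm_8 hpm, div_one]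
  exact (by simpa using norm_natCast_le (p := p) 7)

lemma norm_p4 (hpm : p = 8*m+1) : ‖(p:ℚ_[p])/4‖ ≤ (p:ℝ)⁻¹ := by
  rw [norm_div, norm_4 hpm, div_one, Padic.norm_p]

lemma rinv_le_one : ((p:ℝ)⁻¹ : ℝ) ≤ 1 := by
  have : (1:ℝ) ≤ p := by exact_mod_cast (Fact.out : p.Prime).one_lt.le
  exact inv_le_one_of_one_le₀ this

lemma rinv_lt_one : ((p:ℝ)⁻¹ : ℝ) < 1 := by
  have : (1:ℝ) < p := by exact_mod_cast (Fact.out : p.Prime).one_lt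
  exact inv_lt_one_of_one_lt₀ this

lemma rinv_nonneg : (0:ℝ) ≤ (p:ℝ)⁻¹ := by positivity

-- ================= unit norms of shifted factors =====================

lemma norm_78j (hpm : p = 8*m+1) {j : ℕ} (hj : j < 2*m) :
    ‖(7:ℚ_[p])/8 + (j:ℚ_[p])‖ = 1 := by
  have e : (7:ℚ_[p])/8 * 8 = 7 := by norm_num
  have hkey : ((7:ℚ_[p])/8 + (j:ℚ_[p])) * 8 = ((8*j+7 : ℕ) : ℚ_[p]) := by
    push_cast; linear_combination e
  have hn := congrArg (fun t : ℚ_[p] => ‖t‖) hkey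
  simp only [norm_mul] at hn
  rw [norm_8 hpm, mul_one, norm_natCast_eq_one (not_dvd_Cfac hpm hj)] at hn
  exact hn

lemma norm_rf78x (hpm : p = 8*m+1) {x : ℚ_[p]} (hx : ‖x‖ ≤ (p:ℝ)⁻¹) {k : ℕ}
    (hk : k ≤ 2*m) : ‖rf ((7:ℚ_[p])/8 + x) k‖ = 1 := by
  rw [rf, norm_prod]
  refine Finset.prod_eq_one fun i hi => ?_
  have hi' : i < k := Finset.mem_range.mp hi
  have hbase : ‖(7:ℚ_[p])/8 + (i:ℚ_[p])‖ = 1 := norm_78j hpm (by omega)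
  have hre : (7:ℚ_[p])/8 + x + (i:ℚ_[p]) = ((7:ℚ_[p])/8 + (i:ℚ_[p])) + x := by ring
  rw [hre, norm_add_eq_left (by rw [hbase]; exact lt_of_le_of_lt hx rinv_lt_one), hbase]

lemma norm_rf78 (hpm : p = 8*m+1) {k : ℕ} (hk : k ≤ 2*m) :
    ‖rf ((7:ℚ_[p])/8) k‖ = 1 := by
  rw [rf, norm_prod]
  refine Finset.prod_eq_one fun i hi => ?_
  have hi' : i < k := Finset.mem_range.mp hi
  exact norm_78j hpm (by omega)

-- ================= u and its properties =====================

noncomputable def u (p : ℕ) [Fact p.Prime] (k : ℕ) : ℚ_[p] :=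
  (16*(k:ℚ_[p])+1) *
    (rf ((1:ℚ_[p])/8) k * rf ((1:ℚ_[p])/4) k * rf ((1:ℚ_[p])/4) k * rf ((1:ℚ_[p])/4) k *
      rf ((1:ℚ_[p])/4) k * rf ((1:ℚ_[p])/4) k) /
  (rf ((7:ℚ_[p])/8) k * rf ((7:ℚ_[p])/8) k * rf ((7:ℚ_[p])/8) k * rf ((7:ℚ_[p])/8) k *
    rf ((7:ℚ_[p])/8) k * (k.factorial : ℚ_[p]))

lemma u_eq (hpm : p = 8*m+1) {k : ℕ} (hk : k ≤ 2*m) :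
    u p k = (((16*k+1) * 2^(2*k) * A k * B k^5 : ℕ) : ℚ_[p])
      / ((C k^5 * k.factorial : ℕ) : ℚ_[p]) := by
  have hA := rfA (p := p) k
  have hB := rfB (p := p) k
  have hC := rfC (p := p) k
  have hB5 : (rf ((1:ℚ_[p])/4) k * 2^(2*k))^5 = ((B k : ℕ) : ℚ_[p])^5 := by rw [hB]
  have hC5 : (rf ((7:ℚ_[p])/8) k * 2^(3*k))^5 = ((C k : ℕ) : ℚ_[p])^5 := by rw [hC]
  have hDne : (rf ((7:ℚ_[p])/8) k * rf ((7:ℚ_[p])/8) k * rf ((7:ℚ_[p])/8) k *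
      rf ((7:ℚ_[p])/8) k * rf ((7:ℚ_[p])/8) k * (k.factorial : ℚ_[p])) ≠ 0 := by
    have h78 : rf ((7:ℚ_[p])/8) k ≠ 0 := by
      intro h0
      rw [h0, zero_mul] at hC
      exact (Nat.cast_ne_zero.mpr (C_pos k).ne') hC.symm
    have hfne : ((k.factorial : ℕ) : ℚ_[p]) ≠ 0 :=
      Nat.cast_ne_zero.mpr k.factorial_ne_zero
    exact mul_ne_zero (mul_ne_zero (mul_ne_zero (mul_ne_zero (mul_ne_zero h78 h78) h78) h78) h78) hfne
  have hD'ne : ((C k^5 * k.factorial : ℕ) : ℚ_[p]) ≠ 0 := by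
    refine Nat.cast_ne_zero.mpr ?_
    have := C_pos k
    have := k.factorial_pos
    positivity
  rw [u, div_eq_div_iff hDne hD'ne]
  push_cast
  push_cast at hB5 hC5 hA
  linear_combination (-((16*(k:ℚ_[p])+1) * (k.factorial : ℚ_[p]) *
      (rf ((1:ℚ_[p])/8) k * rf ((1:ℚ_[p])/4) k ^4 * rf ((1:ℚ_[p])/4) k))) * hC5 +
    ((16*(k:ℚ_[p])+1) * (k.factorial : ℚ_[p]) * (rf ((7:ℚ_[p])/8) k)^5 * 2^(2*k) *
      ((rf ((1:ℚ_[p])/4) k * 2^(2*k))^5)) * hA +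
    ((16*(k:ℚ_[p])+1) * (k.factorial : ℚ_[p]) * (rf ((7:ℚ_[p])/8) k)^5 * 2^(2*k) *
      ((A k : ℚ_[p]))) * hB5

lemma u_small (hpm : p = 8*m+1) {k : ℕ} (h1 : m < k) (h2 : k ≤ 2*m) :
    ‖u p k‖ ≤ (p:ℝ)⁻¹ := by
  rw [u_eq hpm h2, norm_div, norm_D hpm h2, div_one]
  refine norm_natCast_le_inv ?_
  have hm : m ∈ Finset.range k := Finset.mem_range.mpr h1
  have hpA : p ∣ A k := by
    rw [A, hpm]
    exact Finset.dvd_prod_of_mem (fun j => 8*j+1) hm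
  exact ((hpA.mul_left _).mul_right _)

lemma u_pair (hpm : p = 8*m+1) {k j : ℕ} (hkj : k + j = m) :
    ‖u p k + u p j‖ ≤ (p:ℝ)⁻¹ := by
  have hk2 : k ≤ 2*m := by omega
  have hj2 : j ≤ 2*m := by omega
  have hDk : ‖((C k^5 * k.factorial : ℕ) : ℚ_[p])‖ = 1 := norm_D hpm hk2
  have hDj : ‖((C j^5 * j.factorial : ℕ) : ℚ_[p])‖ = 1 := norm_D hpm hj2
  have hDk0 : ((C k^5 * k.factorial : ℕ) : ℚ_[p]) ≠ 0 := by
    intro h0; rw [h0, norm_zero] at hDk; norm_num at hDk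
  have hDj0 : ((C j^5 * j.factorial : ℕ) : ℚ_[p]) ≠ 0 := by
    intro h0; rw [h0, norm_zero] at hDj; norm_num at hDj
  rw [u_eq hpm hk2, u_eq hpm hj2, div_add_div _ _ hDk0 hDj0, norm_div, norm_mul,
    hDk, hDj, mul_one, div_one]
  have hnum : (((16*k+1) * 2^(2*k) * A k * B k^5 : ℕ) : ℚ_[p]) * ((C j^5 * j.factorial : ℕ) : ℚ_[p])
      + ((C k^5 * k.factorial : ℕ) : ℚ_[p]) * (((16*j+1) * 2^(2*j) * A j * B j^5 : ℕ) : ℚ_[p])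
      = ((((16*k+1) * 2^(2*k) * A k * B k^5 * (C j^5 * j.factorial)
          + (16*j+1) * 2^(2*j) * A j * B j^5 * (C k^5 * k.factorial)) : ℕ) : ℚ_[p]) := by
    push_cast; ring
  rw [hnum]
  refine norm_natCast_le_inv ?_
  have h0 : ((((16*k+1) * 2^(2*k) * A k * B k^5 * (C j^5 * j.factorial)
      + (16*j+1) * 2^(2*j) * A j * B j^5 * (C k^5 * k.factorial)) : ℕ) : ZMod p) = 0 := by
    rw [show ((16*k+1) * 2^(2*k) * A k * B k^5 * (C j^5 * j.factorial)
      + (16*j+1) * 2^(2*j) * A j * B j^5 * (C k^5 * k.factorial))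
      = ((16*k+1) * 2^(2*k) * A k * B k^5 * C j^5 * j.factorial
      + (16*j+1) * 2^(2*j) * A j * B j^5 * C k^5 * k.factorial) from by ring]
    exact pair hpm hkj
  exact (ZMod.natCast_eq_zero_iff _ _).mp h0


-- ================= termwise congruence =====================

lemma norm_mul_le_one {a b : ℚ_[p]} (ha : ‖a‖ ≤ 1) (hb : ‖b‖ ≤ 1) : ‖a * b‖ ≤ 1 := by
  rw [norm_mul]
  exact mul_le_one₀ ha (norm_nonneg _) hb

lemma norm_add_le_one {a b : ℚ_[p]} (ha : ‖a‖ ≤ 1) (hb : ‖b‖ ≤ 1) : ‖a + b‖ ≤ 1 :=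
  le_trans (Padic.nonarchimedean _ _) (max_le ha hb)

lemma norm_sub_le_one {a b : ℚ_[p]} (ha : ‖a‖ ≤ 1) (hb : ‖b‖ ≤ 1) : ‖a - b‖ ≤ 1 := by
  rw [sub_eq_add_neg]
  exact norm_add_le_one ha (by rwa [norm_neg])

set_option maxHeartbeats 2000000 in
lemma term_cong (hpm : p = 8*m+1) {x y z w : ℚ_[p]}
    (hx : ‖x‖ ≤ (p:ℝ)⁻¹) (hy : ‖y‖ ≤ (p:ℝ)⁻¹) (hz : ‖z‖ ≤ (p:ℝ)⁻¹) (hw : ‖w‖ ≤ (p:ℝ)⁻¹)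
    {k : ℕ} (hk : k ≤ 2*m) :
    ‖(16*(k:ℚ_[p])+1) *
        (rf ((1:ℚ_[p])/8) k * rf ((1:ℚ_[p])/4 - x) k * rf ((1:ℚ_[p])/4 - y) k *
          rf ((1:ℚ_[p])/4 - z) k * rf ((1:ℚ_[p])/4 - w) k * rf ((1 - (p:ℚ_[p]))/4) k) /
      (rf ((7:ℚ_[p])/8 + x) k * rf ((7:ℚ_[p])/8 + y) k * rf ((7:ℚ_[p])/8 + z) k *
        rf ((7:ℚ_[p])/8 + w) k * rf ((7:ℚ_[p])/8 + (p:ℚ_[p])/4) k * (k.factorial : ℚ_[p]))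
      - u p k‖ ≤ (p:ℝ)⁻¹ := by
  have hr0 : (0:ℝ) ≤ (p:ℝ)⁻¹ := rinv_nonneg
  have hr1 : ((p:ℝ)⁻¹:ℝ) ≤ 1 := rinv_le_one
  have h18 : ‖(1:ℚ_[p])/8‖ ≤ 1 := norm_18_le hpm
  have h14 : ‖(1:ℚ_[p])/4‖ ≤ 1 := norm_14_le hpm
  have h78 : ‖(7:ℚ_[p])/8‖ ≤ 1 := norm_78_le hpm
  -- numerator factor congruences
  have cx : ‖rf ((1:ℚ_[p])/4 - x) k - rf ((1:ℚ_[p])/4) k‖ ≤ (p:ℝ)⁻¹ := by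
    refine rf_cong h14 ?_ hr1 k
    rw [show (1:ℚ_[p])/4 - x - (1:ℚ_[p])/4 = -x from by ring, norm_neg]; exact hx
  have cy : ‖rf ((1:ℚ_[p])/4 - y) k - rf ((1:ℚ_[p])/4) k‖ ≤ (p:ℝ)⁻¹ := by
    refine rf_cong h14 ?_ hr1 k
    rw [show (1:ℚ_[p])/4 - y - (1:ℚ_[p])/4 = -y from by ring, norm_neg]; exact hy
  have cz : ‖rf ((1:ℚ_[p])/4 - z) k - rf ((1:ℚ_[p])/4) k‖ ≤ (p:ℝ)⁻¹ := by
    refine rf_cong h14 ?_ hr1 k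
    rw [show (1:ℚ_[p])/4 - z - (1:ℚ_[p])/4 = -z from by ring, norm_neg]; exact hz
  have cw : ‖rf ((1:ℚ_[p])/4 - w) k - rf ((1:ℚ_[p])/4) k‖ ≤ (p:ℝ)⁻¹ := by
    refine rf_cong h14 ?_ hr1 k
    rw [show (1:ℚ_[p])/4 - w - (1:ℚ_[p])/4 = -w from by ring, norm_neg]; exact hw
  have cp : ‖rf ((1 - (p:ℚ_[p]))/4) k - rf ((1:ℚ_[p])/4) k‖ ≤ (p:ℝ)⁻¹ := by
    refine rf_cong h14 ?_ hr1 k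
    rw [show (1 - (p:ℚ_[p]))/4 - (1:ℚ_[p])/4 = -((p:ℚ_[p])/4) from by ring, norm_neg]
    exact norm_p4 hpm
  -- norms ≤ 1 of numerator factors
  have nx : ‖rf ((1:ℚ_[p])/4 - x) k‖ ≤ 1 := rf_norm_le (norm_sub_le_one h14 (le_trans hx hr1)) k
  have ny : ‖rf ((1:ℚ_[p])/4 - y) k‖ ≤ 1 := rf_norm_le (norm_sub_le_one h14 (le_trans hy hr1)) k
  have nz : ‖rf ((1:ℚ_[p])/4 - z) k‖ ≤ 1 := rf_norm_le (norm_sub_le_one h14 (le_trans hz hr1)) k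
  have nw : ‖rf ((1:ℚ_[p])/4 - w) k‖ ≤ 1 := rf_norm_le (norm_sub_le_one h14 (le_trans hw hr1)) k
  have n18 : ‖rf ((1:ℚ_[p])/8) k‖ ≤ 1 := rf_norm_le h18 k
  have n14 : ‖rf ((1:ℚ_[p])/4) k‖ ≤ 1 := rf_norm_le h14 k
  have npq : ‖rf ((1 - (p:ℚ_[p]))/4) k‖ ≤ 1 := by
    refine rf_norm_le ?_ k
    rw [show (1 - (p:ℚ_[p]))/4 = (1:ℚ_[p])/4 - (p:ℚ_[p])/4 from by ring]
    exact norm_sub_le_one h14 (le_trans (norm_p4 hpm) hr1)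
  -- denominator unit norms
  have dx : ‖rf ((7:ℚ_[p])/8 + x) k‖ = 1 := norm_rf78x hpm hx hk
  have dy : ‖rf ((7:ℚ_[p])/8 + y) k‖ = 1 := norm_rf78x hpm hy hk
  have dz : ‖rf ((7:ℚ_[p])/8 + z) k‖ = 1 := norm_rf78x hpm hz hk
  have dw : ‖rf ((7:ℚ_[p])/8 + w) k‖ = 1 := norm_rf78x hpm hw hk
  have dp : ‖rf ((7:ℚ_[p])/8 + (p:ℚ_[p])/4) k‖ = 1 := norm_rf78x hpm (norm_p4 hpm) hk
  have d78 : ‖rf ((7:ℚ_[p])/8) k‖ = 1 := norm_rf78 hpm hk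
  have dfac : ‖((k.factorial : ℕ) : ℚ_[p])‖ = 1 := norm_natCast_eq_one (not_dvd_fac hpm hk)
  -- denominator factor congruences
  have ex : ‖rf ((7:ℚ_[p])/8) k - rf ((7:ℚ_[p])/8 + x) k‖ ≤ (p:ℝ)⁻¹ := by
    refine rf_cong (norm_add_le_one h78 (le_trans hx hr1)) ?_ hr1 k
    rw [show (7:ℚ_[p])/8 - ((7:ℚ_[p])/8 + x) = -x from by ring, norm_neg]; exact hx
  have ey : ‖rf ((7:ℚ_[p])/8) k - rf ((7:ℚ_[p])/8 + y) k‖ ≤ (p:ℝ)⁻¹ := by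
    refine rf_cong (norm_add_le_one h78 (le_trans hy hr1)) ?_ hr1 k
    rw [show (7:ℚ_[p])/8 - ((7:ℚ_[p])/8 + y) = -y from by ring, norm_neg]; exact hy
  have ez : ‖rf ((7:ℚ_[p])/8) k - rf ((7:ℚ_[p])/8 + z) k‖ ≤ (p:ℝ)⁻¹ := by
    refine rf_cong (norm_add_le_one h78 (le_trans hz hr1)) ?_ hr1 k
    rw [show (7:ℚ_[p])/8 - ((7:ℚ_[p])/8 + z) = -z from by ring, norm_neg]; exact hz
  have ew : ‖rf ((7:ℚ_[p])/8) k - rf ((7:ℚ_[p])/8 + w) k‖ ≤ (p:ℝ)⁻¹ := by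
    refine rf_cong (norm_add_le_one h78 (le_trans hw hr1)) ?_ hr1 k
    rw [show (7:ℚ_[p])/8 - ((7:ℚ_[p])/8 + w) = -w from by ring, norm_neg]; exact hw
  have ep : ‖rf ((7:ℚ_[p])/8) k - rf ((7:ℚ_[p])/8 + (p:ℚ_[p])/4) k‖ ≤ (p:ℝ)⁻¹ := by
    refine rf_cong (norm_add_le_one h78 (le_trans (norm_p4 hpm) hr1)) ?_ hr1 k
    rw [show (7:ℚ_[p])/8 - ((7:ℚ_[p])/8 + (p:ℚ_[p])/4) = -((p:ℚ_[p])/4) from by ring, norm_neg]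
    exact norm_p4 hpm
  -- numerator congruence
  have c18 : ‖rf ((1:ℚ_[p])/8) k - rf ((1:ℚ_[p])/8) k‖ ≤ (p:ℝ)⁻¹ := by
    rw [sub_self, norm_zero]; exact hr0
  have hN : ‖(rf ((1:ℚ_[p])/8) k * rf ((1:ℚ_[p])/4 - x) k * rf ((1:ℚ_[p])/4 - y) k *
        rf ((1:ℚ_[p])/4 - z) k * rf ((1:ℚ_[p])/4 - w) k * rf ((1 - (p:ℚ_[p]))/4) k) -
      (rf ((1:ℚ_[p])/8) k * rf ((1:ℚ_[p])/4) k * rf ((1:ℚ_[p])/4) k * rf ((1:ℚ_[p])/4) k *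
        rf ((1:ℚ_[p])/4) k * rf ((1:ℚ_[p])/4) k)‖ ≤ (p:ℝ)⁻¹ := by
    refine cong_mul ?_ n14 (cong_mul ?_ n14 (cong_mul ?_ n14 (cong_mul ?_ n14
      (cong_mul n18 n14 c18 cx) cy) cz) cw) cp
    · exact norm_mul_le_one (norm_mul_le_one (norm_mul_le_one (norm_mul_le_one n18 nx) ny) nz) nw
    · exact norm_mul_le_one (norm_mul_le_one (norm_mul_le_one n18 nx) ny) nz
    · exact norm_mul_le_one (norm_mul_le_one n18 nx) ny
    · exact norm_mul_le_one n18 nx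
  -- denominator congruence (D0 minus D1)
  have cfac : ‖((k.factorial : ℕ) : ℚ_[p]) - ((k.factorial : ℕ) : ℚ_[p])‖ ≤ (p:ℝ)⁻¹ := by
    rw [sub_self, norm_zero]; exact hr0
  have hD : ‖(rf ((7:ℚ_[p])/8) k * rf ((7:ℚ_[p])/8) k * rf ((7:ℚ_[p])/8) k * rf ((7:ℚ_[p])/8) k *
        rf ((7:ℚ_[p])/8) k * (k.factorial : ℚ_[p])) -
      (rf ((7:ℚ_[p])/8 + x) k * rf ((7:ℚ_[p])/8 + y) k * rf ((7:ℚ_[p])/8 + z) k *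
        rf ((7:ℚ_[p])/8 + w) k * rf ((7:ℚ_[p])/8 + (p:ℚ_[p])/4) k * (k.factorial : ℚ_[p]))‖
      ≤ (p:ℝ)⁻¹ := by
    refine cong_mul ?_ (le_of_eq dfac) (cong_mul ?_ (le_of_eq dp) (cong_mul ?_ (le_of_eq dw)
      (cong_mul ?_ (le_of_eq dz) (cong_mul (le_of_eq d78) (le_of_eq dy) ex ey) ez) ew) ep) cfac
    · exact norm_mul_le_one (norm_mul_le_one (norm_mul_le_one (norm_mul_le_one
        (le_of_eq d78) (le_of_eq d78)) (le_of_eq d78)) (le_of_eq d78)) (le_of_eq d78)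
    · exact norm_mul_le_one (norm_mul_le_one (norm_mul_le_one (le_of_eq d78) (le_of_eq d78))
        (le_of_eq d78)) (le_of_eq d78)
    · exact norm_mul_le_one (norm_mul_le_one (le_of_eq d78) (le_of_eq d78)) (le_of_eq d78)
    · exact norm_mul_le_one (le_of_eq d78) (le_of_eq d78)
  -- assemble
  have he : ‖(16*(k:ℚ_[p])+1)‖ ≤ 1 := by
    rw [show (16*(k:ℚ_[p])+1) = ((16*k+1 : ℕ) : ℚ_[p]) from by push_cast; ring]
    exact norm_natCast_le _
  have hN1 : ‖rf ((1:ℚ_[p])/8) k * rf ((1:ℚ_[p])/4 - x) k * rf ((1:ℚ_[p])/4 - y) k *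
      rf ((1:ℚ_[p])/4 - z) k * rf ((1:ℚ_[p])/4 - w) k * rf ((1 - (p:ℚ_[p]))/4) k‖ ≤ 1 :=
    norm_mul_le_one (norm_mul_le_one (norm_mul_le_one (norm_mul_le_one
      (norm_mul_le_one n18 nx) ny) nz) nw) npq
  have hD1 : ‖rf ((7:ℚ_[p])/8 + x) k * rf ((7:ℚ_[p])/8 + y) k * rf ((7:ℚ_[p])/8 + z) k *
      rf ((7:ℚ_[p])/8 + w) k * rf ((7:ℚ_[p])/8 + (p:ℚ_[p])/4) k * (k.factorial : ℚ_[p])‖ = 1 := by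
    rw [norm_mul, norm_mul, norm_mul, norm_mul, norm_mul, dx, dy, dz, dw, dp, dfac]
    norm_num
  have hD0 : ‖rf ((7:ℚ_[p])/8) k * rf ((7:ℚ_[p])/8) k * rf ((7:ℚ_[p])/8) k * rf ((7:ℚ_[p])/8) k *
      rf ((7:ℚ_[p])/8) k * (k.factorial : ℚ_[p])‖ = 1 := by
    rw [norm_mul, norm_mul, norm_mul, norm_mul, norm_mul, d78, dfac]
    norm_num
  have := cong_div (p := p) he hN hD hN1 hD1 hD0
  rw [u]
  exact this


-- ================= sum bound =====================

lemma exists_of_norm {S : ℚ_[p]} (h : ‖S‖ ≤ (p:ℝ)⁻¹) :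
    ∃ c : ℤ_[p], S = (p : ℚ_[p]) * (c : ℚ_[p]) := by
  have hp0 : (p:ℚ_[p]) ≠ 0 := by
    have := (Fact.out : p.Prime).pos
    exact_mod_cast Nat.cast_ne_zero.mpr this.ne'
  have hle : ‖S / (p:ℚ_[p])‖ ≤ 1 := by
    rw [norm_div, Padic.norm_p]
    have hppos : (0:ℝ) < p := by exact_mod_cast (Fact.out : p.Prime).pos
    refine (div_le_one (inv_pos.mpr hppos)).mpr h
  refine ⟨⟨S / (p:ℚ_[p]), hle⟩, ?_⟩
  show S = (p:ℚ_[p]) * (S / (p:ℚ_[p]))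
  field_simp

set_option maxHeartbeats 2000000 in
lemma sum_norm (hpm : p = 8*m+1) {x y z w : ℚ_[p]}
    (hx : ‖x‖ ≤ (p:ℝ)⁻¹) (hy : ‖y‖ ≤ (p:ℝ)⁻¹) (hz : ‖z‖ ≤ (p:ℝ)⁻¹) (hw : ‖w‖ ≤ (p:ℝ)⁻¹) :
    ‖∑ k ∈ Finset.range (2*m+1),
        (16 * (k : ℚ_[p]) + 1) *
          (rf ((1 : ℚ_[p]) / 8) k *
            rf ((1 : ℚ_[p]) / 4 - x) k * rf ((1 : ℚ_[p]) / 4 - y) k *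
            rf ((1 : ℚ_[p]) / 4 - z) k * rf ((1 : ℚ_[p]) / 4 - w) k *
            rf ((1 - (p : ℚ_[p])) / 4) k) /
          (rf ((7 : ℚ_[p]) / 8 + x) k * rf ((7 : ℚ_[p]) / 8 + y) k *
            rf ((7 : ℚ_[p]) / 8 + z) k * rf ((7 : ℚ_[p]) / 8 + w) k *
            rf ((7 : ℚ_[p]) / 8 + (p : ℚ_[p]) / 4) k * (k.factorial : ℚ_[p]))‖
      ≤ (p:ℝ)⁻¹ := by
  have hr0 : (0:ℝ) ≤ (p:ℝ)⁻¹ := rinv_nonneg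
  set T : ℕ → ℚ_[p] := fun k =>
    (16 * (k : ℚ_[p]) + 1) *
      (rf ((1 : ℚ_[p]) / 8) k *
        rf ((1 : ℚ_[p]) / 4 - x) k * rf ((1 : ℚ_[p]) / 4 - y) k *
        rf ((1 : ℚ_[p]) / 4 - z) k * rf ((1 : ℚ_[p]) / 4 - w) k *
        rf ((1 - (p : ℚ_[p])) / 4) k) /
      (rf ((7 : ℚ_[p]) / 8 + x) k * rf ((7 : ℚ_[p]) / 8 + y) k *
        rf ((7 : ℚ_[p]) / 8 + z) k * rf ((7 : ℚ_[p]) / 8 + w) k *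
        rf ((7 : ℚ_[p]) / 8 + (p : ℚ_[p]) / 4) k * (k.factorial : ℚ_[p])) with hT
  set S := ∑ k ∈ Finset.range (2*m+1), T k with hS
  set U := ∑ k ∈ Finset.range (2*m+1), u p k with hU
  set U1 := ∑ k ∈ Finset.range (m+1), u p k with hU1
  set U2 := ∑ k ∈ Finset.Ico (m+1) (2*m+1), u p k with hU2
  have e1 : ∑ k ∈ Finset.range (2*m+1), (T k - u p k) = S - U := by
    rw [Finset.sum_sub_distrib]
  have e2 : U1 + U2 = U := by
    rw [hU1, hU2, hU]
    simp only [Finset.range_eq_Ico]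
    exact Finset.sum_Ico_consecutive (u p) (by omega) (by omega)
  have hb1 : ‖S - U‖ ≤ (p:ℝ)⁻¹ := by
    rw [← e1]
    refine IsUltrametricDist.norm_sum_le_of_forall_le_of_nonneg hr0 fun i hi => ?_
    have hi' : i < 2*m+1 := Finset.mem_range.mp hi
    exact term_cong hpm hx hy hz hw (by omega)
  have hb3 : ‖U2‖ ≤ (p:ℝ)⁻¹ := by
    rw [hU2]
    refine IsUltrametricDist.norm_sum_le_of_forall_le_of_nonneg hr0 fun i hi => ?_
    have hi' := Finset.mem_Ico.mp hi
    exact u_small hpm (by omega) (by omega)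
  have hb2 : ‖U1‖ ≤ (p:ℝ)⁻¹ := by
    have hrefl : ∑ k ∈ Finset.range (m+1), u p (m - k) = U1 := by
      have h := Finset.sum_range_reflect (fun k => u p k) (m+1)
      simpa using h
    have h2 : U1 + U1 = ∑ k ∈ Finset.range (m+1), (u p k + u p (m-k)) := by
      rw [Finset.sum_add_distrib, hrefl]
    have hb : ‖U1 + U1‖ ≤ (p:ℝ)⁻¹ := by
      rw [h2]
      refine IsUltrametricDist.norm_sum_le_of_forall_le_of_nonneg hr0 fun i hi => ?_
      have hi' : i < m+1 := Finset.mem_range.mp hi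
      exact u_pair hpm (by omega)
    calc ‖U1‖ = ‖(2:ℚ_[p])‖ * ‖U1‖ := by rw [norm_2 hpm, one_mul]
      _ = ‖(2:ℚ_[p]) * U1‖ := (norm_mul _ _).symm
      _ = ‖U1 + U1‖ := by rw [two_mul]
      _ ≤ (p:ℝ)⁻¹ := hb
  have hdecomp : S = (S - U) + (U1 + U2) := by rw [e2]; ring
  rw [hdecomp]
  refine le_trans (Padic.nonarchimedean _ _) (max_le hb1 ?_)
  exact le_trans (Padic.nonarchimedean _ _) (max_le hb2 hb3)


end Padic
end S15

/-- Let `p ≡ 1 (mod 8)` be a prime. Then for all `x, y, z, w ∈ pℤ_p`,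
`∑_{k=0}^{(p-1)/4} (16k+1) (1/8)_k (1/4-x)_k (1/4-y)_k (1/4-z)_k (1/4-w)_k ((1-p)/4)_k /
  ((7/8+x)_k (7/8+y)_k (7/8+z)_k (7/8+w)_k (7/8+p/4)_k k!) ∈ pℤ_p`. -/
theorem stmt15 (p : ℕ) [Fact p.Prime] (hp : p % 8 = 1) :
    ∀ x y z w : ℚ_[p],
      (∃ s : ℤ_[p], x = (p : ℚ_[p]) * s) → (∃ s : ℤ_[p], y = (p : ℚ_[p]) * s) →
      (∃ s : ℤ_[p], z = (p : ℚ_[p]) * s) → (∃ s : ℤ_[p], w = (p : ℚ_[p]) * s) →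
      ∃ c : ℤ_[p],
        (∑ k ∈ Finset.range ((p - 1) / 4 + 1),
          (16 * (k : ℚ_[p]) + 1) *
            (rf ((1 : ℚ_[p]) / 8) k *
              rf ((1 : ℚ_[p]) / 4 - x) k * rf ((1 : ℚ_[p]) / 4 - y) k *
              rf ((1 : ℚ_[p]) / 4 - z) k * rf ((1 : ℚ_[p]) / 4 - w) k *
              rf ((1 - (p : ℚ_[p])) / 4) k) /
            (rf ((7 : ℚ_[p]) / 8 + x) k * rf ((7 : ℚ_[p]) / 8 + y) k *
              rf ((7 : ℚ_[p]) / 8 + z) k * rf ((7 : ℚ_[p]) / 8 + w) k *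
              rf ((7 : ℚ_[p]) / 8 + (p : ℚ_[p]) / 4) k * (k.factorial : ℚ_[p])))
        = (p : ℚ_[p]) * (c : ℚ_[p]) := by
  rintro x y z w ⟨sx, rfl⟩ ⟨sy, rfl⟩ ⟨sz, rfl⟩ ⟨sw, rfl⟩
  obtain ⟨m, hpm⟩ : ∃ m, p = 8*m+1 := ⟨p/8, by omega⟩
  have hrange : (p - 1)/4 + 1 = 2*m+1 := by omega
  rw [hrange]
  have hnorm : ∀ s : ℤ_[p], ‖(p:ℚ_[p]) * (s:ℚ_[p])‖ ≤ (p:ℝ)⁻¹ := by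
    intro s
    rw [norm_mul, Padic.norm_p]
    exact mul_le_of_le_one_right S15.rinv_nonneg s.2
  exact S15.exists_of_norm (S15.sum_norm hpm (hnorm sx) (hnorm sy) (hnorm sz) (hnorm sw))
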